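/- Let N ≥ 1 and let C, U, V be constant N×N complex matrices. For κ ∈ ℝ define the differential operator D^{(κ)} acting on the right of smooth matrix-valued functions Q : ℝ → M_N(ℂ) by (Q D^{(κ)})(y) := y(1−y)Q''(y) + Q'(y)((C + κI) − y(U + 2κI)) − Q(y)(V + κU + κ(κ−1)I). Then for every κ ∈ ℝ and every smooth Q : ℝ → M_N(ℂ) one has ∂_y(Q D^{(κ)}) = (∂_y Q) D^{(κ+1)}, i.e. ∂_y ∘ D^{(κ)} = D^{(κ+1)} ∘ ∂_y. -/

import Mathlib

open Matrix

/-- Entrywise derivative of a matrix-valued function on `ℝ`. -/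
noncomputable def mderiv {N : ℕ} (Q : ℝ → Matrix (Fin N) (Fin N) ℂ) :
    ℝ → Matrix (Fin N) (Fin N) ℂ :=
  fun y => Matrix.of fun i j => deriv (fun t => Q t i j) y

/-- The differential operator `D^{(κ)}`, acting on the right of matrix-valued functions:
`(Q D^{(κ)})(y) = y(1−y)Q''(y) + Q'(y)((C+κI) − y(U+2κI)) − Q(y)(V + κU + κ(κ−1)I)`. -/
noncomputable def Dop {N : ℕ} (C U V : Matrix (Fin N) (Fin N) ℂ) (κ : ℝ)
    (Q : ℝ → Matrix (Fin N) (Fin N) ℂ) : ℝ → Matrix (Fin N) (Fin N) ℂ :=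
  fun y =>
    ((y : ℂ) * (1 - (y : ℂ))) • mderiv (mderiv Q) y
      + mderiv Q y * ((C + (κ : ℂ) • (1 : Matrix (Fin N) (Fin N) ℂ))
          - (y : ℂ) • (U + (2 * (κ : ℂ)) • (1 : Matrix (Fin N) (Fin N) ℂ)))
      - Q y * (V + (κ : ℂ) • U + ((κ : ℂ) * ((κ : ℂ) - 1)) • (1 : Matrix (Fin N) (Fin N) ℂ))

/-- `∂_y ∘ D^{(κ)} = D^{(κ+1)} ∘ ∂_y` on smooth matrix-valued functions. -/
theorem stmt1 {N : ℕ} (hN : 1 ≤ N) (C U V : Matrix (Fin N) (Fin N) ℂ) (κ : ℝ)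
    (Q : ℝ → Matrix (Fin N) (Fin N) ℂ)
    (hQ : ∀ i j, ContDiff ℝ (⊤ : ℕ∞) fun t => Q t i j) :
    mderiv (Dop C U V κ Q) = Dop C U V (κ + 1) (mderiv Q) := by
  have hc1 : ∀ i j, ContDiff ℝ (⊤ : ℕ∞) (deriv fun t => Q t i j) := fun i j =>
    (contDiff_infty_iff_deriv.mp (hQ i j)).2
  have hc2 : ∀ i j, ContDiff ℝ (⊤ : ℕ∞) (deriv (deriv fun t => Q t i j)) := fun i j =>
    (contDiff_infty_iff_deriv.mp (hc1 i j)).2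
  have hd0 : ∀ i j, Differentiable ℝ fun t => Q t i j := fun i j =>
    (hQ i j).differentiable (by simp)
  have hd1 : ∀ i j, Differentiable ℝ (deriv fun t => Q t i j) := fun i j =>
    (hc1 i j).differentiable (by simp)
  have hd2 : ∀ i j, Differentiable ℝ (deriv (deriv fun t => Q t i j)) := fun i j =>
    (hc2 i j).differentiable (by simp)
  obtain ⟨A, hA⟩ : ∃ A', A' = C + (κ : ℂ) • (1 : Matrix (Fin N) (Fin N) ℂ) := ⟨_, rfl⟩
  obtain ⟨B, hB⟩ : ∃ B', B' = U + (2 * (κ : ℂ)) • (1 : Matrix (Fin N) (Fin N) ℂ) := ⟨_, rfl⟩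
  obtain ⟨W, hW⟩ : ∃ W', W' = V + (κ : ℂ) • U
      + ((κ : ℂ) * ((κ : ℂ) - 1)) • (1 : Matrix (Fin N) (Fin N) ℂ) := ⟨_, rfl⟩
  funext y
  -- entrywise derivative evaluation
  have H0 : ∀ i k, HasDerivAt (fun t => Q t i k) (mderiv Q y i k) y := fun i k =>
    ((hd0 i k) y).hasDerivAt
  have H1 : ∀ i k, HasDerivAt (fun t => mderiv Q t i k) (mderiv (mderiv Q) y i k) y :=
    fun i k => ((hd1 i k) y).hasDerivAt
  have H2 : ∀ i k, HasDerivAt (fun t => mderiv (mderiv Q) t i k)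
      (mderiv (mderiv (mderiv Q)) y i k) y := fun i k => ((hd2 i k) y).hasDerivAt
  have ht : HasDerivAt (fun t : ℝ => (t : ℂ)) 1 y := (hasDerivAt_id y).ofReal_comp
  have hs : HasDerivAt (fun t : ℝ => (t : ℂ) * (1 - (t : ℂ))) (1 - 2 * (y : ℂ)) y := by
    have := ht.mul ((hasDerivAt_const y (1 : ℂ)).sub ht)
    refine this.congr_deriv ?_
    simp only [Pi.sub_apply]
    ring
  have key : ∀ i j, HasDerivAt (fun t => Dop C U V κ Q t i j)
      ((1 - 2 * (y : ℂ)) * mderiv (mderiv Q) y i j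
        + ((y : ℂ) * (1 - (y : ℂ))) * mderiv (mderiv (mderiv Q)) y i j
        + ((mderiv (mderiv Q) y * (A - (y : ℂ) • B)) i j - (mderiv Q y * B) i j)
        - (mderiv Q y * W) i j) y := by
    intro i j
    have hent : (fun t => Dop C U V κ Q t i j)
        = fun t : ℝ => ((t : ℂ) * (1 - (t : ℂ))) * mderiv (mderiv Q) t i j
          + (∑ k, mderiv Q t i k * (A k j - (t : ℂ) * B k j))
          - ∑ k, Q t i k * W k j := by
      funext t
      simp only [Dop, ← hA, ← hB, ← hW, Matrix.add_apply, Matrix.sub_apply,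
        Matrix.smul_apply, Matrix.mul_apply, smul_eq_mul]
    rw [hent]
    have main := (((hs.mul (H2 i j)).add
        (HasDerivAt.fun_sum (u := Finset.univ) fun k _ => (H1 i k).mul
          ((hasDerivAt_const y (A k j)).sub (ht.mul_const (B k j)))))).sub
        (HasDerivAt.fun_sum (u := Finset.univ) fun k _ => (H0 i k).mul_const (W k j))
    refine main.congr_deriv ?_
    simp only [Pi.sub_apply, Matrix.mul_apply, Matrix.sub_apply, Matrix.smul_apply, smul_eq_mul,
      one_mul, mul_sub, mul_add, mul_zero, Finset.sum_const_zero, Finset.sum_sub_distrib,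
      Finset.sum_add_distrib]
    ring
  have hL : mderiv (Dop C U V κ Q) y
      = (1 - 2 * (y : ℂ)) • mderiv (mderiv Q) y
        + ((y : ℂ) * (1 - (y : ℂ))) • mderiv (mderiv (mderiv Q)) y
        + mderiv (mderiv Q) y * (A - (y : ℂ) • B)
        - mderiv Q y * B - mderiv Q y * W := by
    ext i j
    have := (key i j).deriv
    simp only [mderiv, Matrix.of_apply] at this ⊢
    rw [this]
    simp only [Matrix.add_apply, Matrix.sub_apply, Matrix.smul_apply, Matrix.of_apply,
      smul_eq_mul]
    ring
  have hR : Dop C U V (κ + 1) (mderiv Q) y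
      = ((y : ℂ) * (1 - (y : ℂ))) • mderiv (mderiv (mderiv Q)) y
        + mderiv (mderiv Q) y * ((A + 1) - (y : ℂ) • (B + (2 : ℂ) • 1))
        - mderiv Q y * (W + B) := by
    have e1 : C + ((κ + 1 : ℝ) : ℂ) • (1 : Matrix (Fin N) (Fin N) ℂ) = A + 1 := by
      rw [hA]; push_cast; rw [add_smul, one_smul, add_assoc]
    have e2 : U + (2 * ((κ + 1 : ℝ) : ℂ)) • (1 : Matrix (Fin N) (Fin N) ℂ)
        = B + (2 : ℂ) • 1 := by
      rw [hB]; push_cast; module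
    have e3 : V + ((κ + 1 : ℝ) : ℂ) • U
        + (((κ + 1 : ℝ) : ℂ) * (((κ + 1 : ℝ) : ℂ) - 1)) • (1 : Matrix (Fin N) (Fin N) ℂ)
        = W + B := by
      rw [hW, hB]; push_cast; module
    simp only [Dop, e1, e2, e3]
  rw [hL, hR]
  simp only [mul_sub, mul_add, sub_mul, add_mul, Matrix.mul_one, mul_one,
    mul_smul_comm, smul_sub, smul_add]
  module
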